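/- Let φ ∈ C([0,∞)) ∩ C¹((0,∞)) with φ(0) = 0 and φ' > 0 on (0,∞), and l ∈ C([0,∞)) with l > 0 on (0,∞). Assume there exist χ₁ > −1 and C ≥ 1 such that t ↦ t^{1−χ₁}·φ'(t)/l(t) is C-increasing on (0,∞); then K(t) = ∫₀^t s·φ'(s)/l(s) ds defines an increasing bijection of [0,∞) onto [0,∞), with inverse K⁻¹. Let η̄₀ ≥ 0 and let F be any positive function on (η̄₀,∞). Then there exists B ≥ 1, depending only on C and χ₁ (one may take B = C^{1/(χ₁+1)}), such that for every σ ∈ (0,1] and every t ∈ (η̄₀,∞): σ^{1/(χ₁+1)}/K⁻¹(σ·F(t)) ≤ B/K⁻¹(F(t)). -/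

import Mathlib

open Set MeasureTheory

/-- Given `C ≥ 1`, a function `h` is `C`-increasing on `I` if
`sup {h s : s ∈ I, s ≤ t} ≤ C * h t` for every `t ∈ I`. -/
def CIncreasingOn (C : ℝ) (h : ℝ → ℝ) (I : Set ℝ) : Prop :=
  ∀ s ∈ I, ∀ t ∈ I, s ≤ t → h s ≤ C * h t

/-- Lemma 8.9: under the condition (χ₁) with `χ₁ > −1`, there is `B ≥ 1`
(one may take `B = C^(1/(χ₁+1))`) such that
`σ^(1/(χ₁+1))/K⁻¹(σ F(t)) ≤ B/K⁻¹(F(t))` for every `σ ∈ (0,1]` and `t > η̄₀`. -/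
theorem stmt_16
    (φ φ' l : ℝ → ℝ)
    (hφc : ContinuousOn φ (Ici 0)) (hφ0 : φ 0 = 0)
    (hφd : ∀ t : ℝ, 0 < t → HasDerivAt φ (φ' t) t)
    (hφ'c : ContinuousOn φ' (Ioi 0))
    (hφ'pos : ∀ t : ℝ, 0 < t → 0 < φ' t)
    (hlc : ContinuousOn l (Ici 0)) (hlpos : ∀ t : ℝ, 0 < t → 0 < l t)
    (χ₁ C : ℝ) (hχ₁ : -1 < χ₁) (hC : 1 ≤ C)
    (hchi1 : CIncreasingOn C (fun t => t ^ (1 - χ₁) * φ' t / l t) (Ioi 0))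
    (K Kinv : ℝ → ℝ)
    (hK : ∀ t, K t = ∫ s in (0:ℝ)..t, s * φ' s / l s)
    (hKinv : ∀ t : ℝ, 0 ≤ t → Kinv (K t) = t)
    (ηb₀ : ℝ) (hηb₀ : 0 ≤ ηb₀)
    (F : ℝ → ℝ) (hFpos : ∀ t : ℝ, ηb₀ < t → 0 < F t) :
    ∃ B : ℝ, 1 ≤ B ∧ B = C ^ (1 / (χ₁ + 1)) ∧
      ∀ σ ∈ Ioc (0:ℝ) 1, ∀ t : ℝ, ηb₀ < t →
        σ ^ (1 / (χ₁ + 1)) / Kinv (σ * F t) ≤ B / Kinv (F t) := by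
  have hχ : 0 < χ₁ + 1 := by linarith
  have hCpos : 0 < C := by linarith
  set p := 1 / (χ₁ + 1) with hp
  have hppos : 0 < p := by positivity
  refine ⟨C ^ p, Real.one_le_rpow hC hppos.le, rfl, ?_⟩
  rintro σ ⟨hσ0, hσ1⟩ t ht
  set g : ℝ → ℝ := fun s => s * φ' s / l s with hgdef
  set h : ℝ → ℝ := fun t => t ^ (1 - χ₁) * φ' t / l t with hhdef
  -- basic facts about g, h
  have hgc : ContinuousOn g (Ioi 0) := by
    apply ContinuousOn.div
    · exact continuousOn_id.mul hφ'c
    · exact hlc.mono (Ioi_subset_Ici le_rfl)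
    · exact fun s hs => (hlpos s hs).ne'
  have hgpos : ∀ s : ℝ, 0 < s → 0 < g s := fun s hs =>
    div_pos (mul_pos hs (hφ'pos s hs)) (hlpos s hs)
  have hg0 : g 0 = 0 := by simp [hgdef]
  have hgh : ∀ s : ℝ, 0 < s → g s = s ^ χ₁ * h s := by
    intro s hs
    have h1 : s ^ χ₁ * s ^ (1 - χ₁) = s := by
      rw [← Real.rpow_add hs]; norm_num
    simp only [hgdef, hhdef]
    rw [show s ^ χ₁ * (s ^ (1 - χ₁) * φ' s / l s)
        = (s ^ χ₁ * s ^ (1 - χ₁)) * φ' s / l s by ring, h1]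
  have hhpos : ∀ s : ℝ, 0 < s → 0 < h s := fun s hs =>
    div_pos (mul_pos (Real.rpow_pos_of_pos hs _) (hφ'pos s hs)) (hlpos s hs)
  -- integrability
  have hIntIoc : ∀ b : ℝ, 0 < b → IntegrableOn g (Ioc 0 b) volume := by
    intro b hb
    have hmeas : AEStronglyMeasurable g (volume.restrict (Ioc 0 b)) :=
      (hgc.mono Ioc_subset_Ioi_self).aestronglyMeasurable measurableSet_Ioc
    have hbound : Integrable (fun s => (C * h b) * s ^ χ₁)
        (volume.restrict (Ioc 0 b)) := by
      have h1 := intervalIntegral.intervalIntegrable_rpow' (a := 0) (b := b) hχ₁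
      rw [intervalIntegrable_iff_integrableOn_Ioc_of_le hb.le] at h1
      exact h1.const_mul _
    refine hbound.mono' hmeas ?_
    rw [ae_restrict_iff' measurableSet_Ioc]
    filter_upwards with s hs
    have hs0 : 0 < s := hs.1
    have hsh : h s ≤ C * h b := hchi1 s hs0 b hb hs.2
    rw [Real.norm_of_nonneg (hgpos s hs0).le, hgh s hs0]
    calc s ^ χ₁ * h s ≤ s ^ χ₁ * (C * h b) :=
          mul_le_mul_of_nonneg_left hsh (Real.rpow_nonneg hs0.le _)
      _ = C * h b * s ^ χ₁ := by ring
  have hInt : ∀ b : ℝ, 0 < b → IntervalIntegrable g volume 0 b := fun b hb =>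
    (intervalIntegrable_iff_integrableOn_Ioc_of_le hb.le).2 (hIntIoc b hb)
  have hIntab : ∀ a b : ℝ, 0 ≤ a → a ≤ b → IntervalIntegrable g volume a b := by
    intro a b ha hab
    rcases eq_or_lt_of_le (ha.trans hab) with h0 | h0
    · have ha0 : a = 0 := le_antisymm (hab.trans h0.symm.le) ha
      have hb0 : b = 0 := h0.symm
      subst ha0; subst hb0
      exact IntervalIntegrable.refl
    · refine (hInt b h0).mono_set ?_
      rw [uIcc_of_le hab, uIcc_of_le h0.le]
      exact Icc_subset_Icc ha le_rfl
  have hK0 : K 0 = 0 := by rw [hK]; simp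
  have hKadd : ∀ a b : ℝ, 0 ≤ a → a ≤ b → K b = K a + ∫ s in a..b, g s := by
    intro a b ha hab
    rw [hK, hK,
      ← intervalIntegral.integral_add_adjacent_intervals (hIntab 0 a le_rfl ha)
        (hIntab a b ha hab)]
  have hKlt : ∀ a b : ℝ, 0 ≤ a → a < b → K a < K b := by
    intro a b ha hab
    have hpos : 0 < ∫ s in a..b, g s :=
      intervalIntegral.intervalIntegral_pos_of_pos_on (hIntab a b ha hab.le)
        (fun x hx => hgpos x (lt_of_le_of_lt ha hx.1)) hab
    rw [hKadd a b ha hab.le]; linarith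
  -- K tends to infinity
  have hKlow : ∀ s : ℝ, 1 ≤ s →
      K 1 + h 1 / C * ((s ^ (χ₁ + 1) - 1 ^ (χ₁ + 1)) / (χ₁ + 1)) ≤ K s := by
    intro s hs1
    rw [hKadd 1 s zero_le_one hs1]
    have h1 : ∫ u in (1:ℝ)..s, (h 1 / C) * u ^ χ₁ ≤ ∫ u in (1:ℝ)..s, g u := by
      apply intervalIntegral.integral_mono_on hs1
        ((intervalIntegral.intervalIntegrable_rpow' hχ₁).const_mul _)
        (hIntab 1 s zero_le_one hs1)
      intro x hx
      have hx0 : 0 < x := lt_of_lt_of_le one_pos hx.1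
      have hh1 : h 1 ≤ C * h x := hchi1 1 (Set.mem_Ioi.mpr one_pos) x hx0 hx.1
      have hhx : h 1 / C ≤ h x := by
        rw [div_le_iff₀ hCpos]; linarith [hh1]
      rw [hgh x hx0]
      calc h 1 / C * x ^ χ₁ ≤ h x * x ^ χ₁ :=
            mul_le_mul_of_nonneg_right hhx (Real.rpow_nonneg hx0.le _)
        _ = x ^ χ₁ * h x := mul_comm _ _
    have h2 : ∫ u in (1:ℝ)..s, (h 1 / C) * u ^ χ₁
        = h 1 / C * ((s ^ (χ₁ + 1) - 1 ^ (χ₁ + 1)) / (χ₁ + 1)) := by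
      rw [intervalIntegral.integral_const_mul, integral_rpow (Or.inl hχ₁)]
    linarith [h1, h2.symm.le, h2.le]
  have hKtop : Filter.Tendsto K Filter.atTop Filter.atTop := by
    have hc : 0 < h 1 / C := div_pos (hhpos 1 one_pos) hCpos
    have t1 : Filter.Tendsto (fun s : ℝ => s ^ (χ₁ + 1)) Filter.atTop Filter.atTop :=
      tendsto_rpow_atTop hχ
    have t2 : Filter.Tendsto
        (fun s : ℝ => K 1 + h 1 / C * ((s ^ (χ₁ + 1) - 1 ^ (χ₁ + 1)) / (χ₁ + 1)))
        Filter.atTop Filter.atTop := by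
      apply Filter.tendsto_atTop_add_const_left
      apply Filter.Tendsto.const_mul_atTop hc
      apply Filter.Tendsto.atTop_div_const hχ
      exact Filter.tendsto_atTop_add_const_right _ _ t1
    apply Filter.tendsto_atTop_mono' _ _ t2
    filter_upwards [Filter.eventually_ge_atTop (1:ℝ)] with s hs
    exact hKlow s hs
  -- surjectivity of K onto (0, ∞)
  have hsurj : ∀ y : ℝ, 0 < y → ∃ x : ℝ, 0 < x ∧ K x = y := by
    intro y hy
    obtain ⟨T, hTy, hT1⟩ :=
      ((hKtop.eventually_ge_atTop y).and (Filter.eventually_ge_atTop (1:ℝ))).exists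
    have hT0 : (0:ℝ) ≤ T := le_trans zero_le_one hT1
    have hKcont : ContinuousOn K (Icc 0 T) := by
      rcases eq_or_lt_of_le hT0 with h0 | h0
      · rw [← h0, Icc_self]
        exact continuousOn_singleton _ _
      · have hint : IntegrableOn g (Icc 0 T) volume :=
          (integrableOn_Icc_iff_integrableOn_Ioc (f := g) (by simp)).2 (hIntIoc T h0)
        refine (intervalIntegral.continuousOn_primitive hint).congr ?_
        intro x hx
        rw [hK, intervalIntegral.integral_of_le hx.1]
    have hmem : y ∈ Icc (K 0) (K T) := ⟨by rw [hK0]; exact hy.le, hTy⟩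
    obtain ⟨x, hxmem, hxy⟩ := intermediate_value_Icc hT0 hKcont hmem
    refine ⟨x, ?_, hxy⟩
    rcases eq_or_lt_of_le hxmem.1 with h0 | h0
    · exfalso; rw [← h0, hK0] at hxy; exact hy.ne' hxy.symm
    · exact h0
  -- key scaling inequality
  have hkey : ∀ b : ℝ, 0 < b → ∀ lam : ℝ, 0 < lam → lam ≤ 1 →
      K (lam * b) ≤ C * lam ^ (χ₁ + 1) * K b := by
    intro b hb lam hl0 hl1
    have hlb : 0 < lam * b := mul_pos hl0 hb
    rw [hK (lam * b), hK b]
    have hcompInt : IntervalIntegrable (fun s => g (lam⁻¹ * s)) volume 0 (lam * b) := by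
      have h1 := (hInt b hb).comp_mul_left (c := lam⁻¹)
      have e1 : (0:ℝ) / lam⁻¹ = 0 := by simp
      have e2 : b / lam⁻¹ = lam * b := by field_simp
      rwa [e1, e2] at h1
    have step1 : ∫ s in (0:ℝ)..(lam * b), g s
        ≤ ∫ s in (0:ℝ)..(lam * b), C * lam ^ χ₁ * g (lam⁻¹ * s) := by
      apply intervalIntegral.integral_mono_on hlb.le (hInt _ hlb)
        (hcompInt.const_mul _)
      intro s hs
      rcases eq_or_lt_of_le hs.1 with h0 | h0
      · rw [← h0]
        simp [hg0]
      · have hsl : 0 < lam⁻¹ * s := mul_pos (inv_pos.2 hl0) h0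
        have hsle : s ≤ lam⁻¹ * s :=
          le_mul_of_one_le_left h0.le (one_le_inv₀ hl0 |>.mpr hl1)
        have hhs : h s ≤ C * h (lam⁻¹ * s) := hchi1 s h0 _ hsl hsle
        have hrw : s ^ χ₁ = lam ^ χ₁ * (lam⁻¹ * s) ^ χ₁ := by
          rw [← Real.mul_rpow hl0.le hsl.le]
          congr 1
          field_simp
        calc g s = s ^ χ₁ * h s := hgh s h0
          _ ≤ s ^ χ₁ * (C * h (lam⁻¹ * s)) :=
              mul_le_mul_of_nonneg_left hhs (Real.rpow_nonneg h0.le _)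
          _ = C * lam ^ χ₁ * ((lam⁻¹ * s) ^ χ₁ * h (lam⁻¹ * s)) := by
              rw [hrw]; ring
          _ = C * lam ^ χ₁ * g (lam⁻¹ * s) := by rw [← hgh _ hsl]
    have step2 : ∫ s in (0:ℝ)..(lam * b), C * lam ^ χ₁ * g (lam⁻¹ * s)
        = C * lam ^ (χ₁ + 1) * ∫ s in (0:ℝ)..b, g s := by
      rw [intervalIntegral.integral_const_mul,
        intervalIntegral.integral_comp_mul_left g (inv_ne_zero hl0.ne')]
      have e1 : lam⁻¹ * 0 = (0:ℝ) := by simp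
      have e2 : lam⁻¹ * (lam * b) = b := by field_simp
      rw [e1, e2, inv_inv, smul_eq_mul, Real.rpow_add_one hl0.ne']
      ring
    calc ∫ s in (0:ℝ)..(lam * b), g s
        ≤ ∫ s in (0:ℝ)..(lam * b), C * lam ^ χ₁ * g (lam⁻¹ * s) := step1
      _ = C * lam ^ (χ₁ + 1) * ∫ s in (0:ℝ)..b, g s := step2
  -- assemble
  obtain ⟨x, hx0, hKx⟩ := hsurj (F t) (hFpos t ht)
  obtain ⟨y, hy0, hKy⟩ := hsurj (σ * F t) (mul_pos hσ0 (hFpos t ht))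
  set lam := (σ / C) ^ p with hlam
  have hσC : 0 < σ / C := div_pos hσ0 hCpos
  have hlam0 : 0 < lam := Real.rpow_pos_of_pos hσC _
  have hlam1 : lam ≤ 1 :=
    Real.rpow_le_one hσC.le ((div_le_one hCpos).2 (hσ1.trans hC)) hppos.le
  have hexp : C * lam ^ (χ₁ + 1) = σ := by
    rw [hlam, ← Real.rpow_mul hσC.le, hp, one_div_mul_cancel hχ.ne', Real.rpow_one,
      mul_div_cancel₀ σ hCpos.ne']
  have hKlam : K (lam * x) ≤ σ * F t := by
    have h1 := hkey x hx0 lam hlam0 hlam1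
    rw [hexp, hKx] at h1
    exact h1
  have hxy : lam * x ≤ y := by
    by_contra hcon
    push_neg at hcon
    have h2 := hKlt y (lam * x) hy0.le hcon
    rw [hKy] at h2
    linarith [hKlam]
  have hKinvx : Kinv (F t) = x := by rw [← hKx, hKinv x hx0.le]
  have hKinvy : Kinv (σ * F t) = y := by rw [← hKy, hKinv y hy0.le]
  rw [hKinvx, hKinvy, div_le_div_iff₀ hy0 hx0]
  have hBlam : C ^ p * lam = σ ^ p := by
    rw [hlam, Real.div_rpow hσ0.le hCpos.le]
    field_simp
  calc σ ^ p * x = C ^ p * (lam * x) := by rw [← hBlam]; ring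
    _ ≤ C ^ p * y := mul_le_mul_of_nonneg_left hxy (by positivity)
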